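/- Fix N ≥ 1 complex numbers λ_1, …, λ_N (all nonzero, all ≠ 1) satisfying the deformed Bethe equation λ_j^L (1 - λ_j^{-1})^N = z^L for a fixed nonzero complex z and positive integers N ≤ L. Then summing the determinant det[(1-λ_j^{-1})^{-i} λ_j^{-x_i}]_{i,j=1}^N over all configurations X = (x_1 < x_2 < ⋯ < x_N) with 0 ≤ x_1 < ⋯ < x_N ≤ L-1 yields (1 + (-1)^N z^{-L} ∏_{i=1}^N (1 - λ_i^{-1})) · det[(1-λ_j^{-1})^{-i-1}]_{i,j=1}^N. -/

import Mathlib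

open scoped Classical
namespace SCB
open Finset Matrix

-- (in the real file these already exist)
open Finset Matrix

lemma det_updateRow_sum'' {n : Type*} [DecidableEq n] [Fintype n]
    (M : Matrix n n ℂ) (j : n) {ι : Type*} (s : Finset ι) (r : ι → n → ℂ) :
    (M.updateRow j (∑ a ∈ s, r a)).det = ∑ a ∈ s, (M.updateRow j (r a)).det := by
  classical
  induction s using Finset.induction_on with
  | empty =>
      have h := Matrix.det_updateRow_smul M j (0 : ℂ) (fun _ => 0)
      simpa using h
  | @insert a s ha ih =>
      rw [Finset.sum_insert ha, Matrix.det_updateRow_add, ih, Finset.sum_insert ha]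

lemma geom (mu b : ℂ) (hb : b = 1 - mu) (hb0 : b ≠ 0) (t : ℕ) :
    ∑ x ∈ Finset.range t, mu ^ x = (1 - mu ^ t) / b := by
  have hmu : mu ≠ 1 := by
    intro h; apply hb0; rw [hb, h]; ring
  rw [geom_sum_eq hmu, hb]
  rw [div_eq_div_iff (fun h => hmu (sub_eq_zero.mp h)) (by rw [hb] at hb0; exact hb0)]
  ring

lemma strictMono_cons {m L : ℕ} {a : Fin L} {g : Fin (m + 1) → Fin L}
    (hg : StrictMono g) (ha : a < g 0) : StrictMono (Fin.cons a g) := by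
  rw [Fin.strictMono_iff_lt_succ]
  intro i
  induction i using Fin.cases with
  | zero => simpa using ha
  | succ j =>
      rw [Fin.cons_succ, ← Fin.succ_castSucc, Fin.cons_succ]
      exact hg Fin.castSucc_lt_succ

noncomputable def consEquiv (L m : ℕ) : {f : Fin (m + 2) → Fin L // StrictMono f} ≃
    Σ g : {g : Fin (m + 1) → Fin L // StrictMono g}, {a : Fin L // a < g.1 0} where
  toFun f := ⟨⟨fun i => f.1 i.succ, fun i j hij => f.2 (Fin.succ_lt_succ_iff.mpr hij)⟩,
              ⟨f.1 0, f.2 (Fin.succ_pos 0)⟩⟩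
  invFun p := ⟨Fin.cons p.2.1 p.1.1, strictMono_cons p.1.2 p.2.2⟩
  left_inv f := by
    apply Subtype.ext
    exact Fin.cons_self_tail f.1
  right_inv p := by
    rcases p with ⟨⟨g, hg⟩, ⟨a, ha⟩⟩
    apply Sigma.ext
    · apply Subtype.ext
      funext i
      simp [Fin.cons_succ]
    · simp [Fin.cons_zero]
      rfl

lemma sum_subtype_lt {L : ℕ} (t : Fin L) (F : ℕ → ℂ) :
    ∑ a : {a : Fin L // a < t}, F (a.1 : ℕ) = ∑ x ∈ Finset.range (t : ℕ), F x := by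
  rw [← Fin.sum_univ_eq_sum_range]
  exact Fintype.sum_equiv
    (⟨fun a => ⟨a.1.1, a.2⟩, fun x => ⟨⟨x.1, x.2.trans t.isLt⟩, x.2.trans_le le_rfl⟩,
      fun a => by apply Subtype.ext; apply Fin.ext; rfl, fun x => by apply Fin.ext; rfl⟩ :
      {a : Fin L // a < t} ≃ Fin (t : ℕ))
    _ _ (fun a => rfl)

/-- the interpolating matrix: the first `N - m` rows are "integrated out". -/
noncomputable def mat (N L : ℕ) (b mu : Fin N → ℂ) (m : ℕ) (f : Fin m → Fin L) :
    Matrix (Fin N) (Fin N) ℂ :=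
  Matrix.of fun i j =>
    if (i : ℕ) < N - m then b j ^ (-((i : ℕ) : ℤ) - 2)
    else if h2 : (i : ℕ) - (N - m) < m then
      b j ^ (-((i : ℕ) : ℤ) - 1) * mu j ^ ((f ⟨(i : ℕ) - (N - m), h2⟩ : Fin L) : ℕ)
    else 0

lemma mat_apply (N L : ℕ) (b mu : Fin N → ℂ) (m : ℕ) (f : Fin m → Fin L) (i j : Fin N) :
    mat N L b mu m f i j =
    if (i : ℕ) < N - m then b j ^ (-((i : ℕ) : ℤ) - 2)
    else if h2 : (i : ℕ) - (N - m) < m then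
      b j ^ (-((i : ℕ) : ℤ) - 1) * mu j ^ ((f ⟨(i : ℕ) - (N - m), h2⟩ : Fin L) : ℕ)
    else 0 := rfl

lemma mat_row_fixed (N L m : ℕ) (b mu : Fin N → ℂ) (f : Fin m → Fin L) (i : Fin N)
    (hi : (i : ℕ) < N - m) :
    mat N L b mu m f i = fun j => b j ^ (-((i : ℕ) : ℤ) - 2) := by
  funext j
  rw [mat_apply, if_pos hi]

lemma mat_row_var (N L m : ℕ) (b mu : Fin N → ℂ) (f : Fin m → Fin L) (i : Fin N) (r : Fin m)
    (hi : (i : ℕ) = N - m + (r : ℕ)) (hm : m ≤ N) :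
    mat N L b mu m f i = fun j => b j ^ (-((i : ℕ) : ℤ) - 1) * mu j ^ ((f r : Fin L) : ℕ) := by
  funext j
  have hrm : (r : ℕ) < m := r.isLt
  rw [mat_apply, if_neg (by omega), dif_pos (by omega)]
  congr 2
  apply congrArg
  apply congrArg
  apply Fin.ext
  show (i : ℕ) - (N - m) = (r : ℕ)
  omega

noncomputable def bSum (N L : ℕ) (b mu : Fin N → ℂ) (m : ℕ) : ℂ :=
  ∑ f : {f : Fin m → Fin L // StrictMono f}, (mat N L b mu m f.1).det

lemma step (N L : ℕ) (b mu : Fin N → ℂ) (hb : ∀ j, b j = 1 - mu j) (hb0 : ∀ j, b j ≠ 0)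
    (m : ℕ) (hm : 1 ≤ m) (hmN : m + 1 ≤ N) :
    bSum N L b mu (m + 1) = bSum N L b mu m := by
  obtain ⟨m, rfl⟩ : ∃ m', m = m' + 1 := ⟨m - 1, by omega⟩
  have hkN : N - (m + 2) < N := by omega
  have hk1N : N - (m + 2) + 1 < N := by omega
  set k : ℕ := N - (m + 2) with hk
  have hNm1 : N - (m + 1) = k + 1 := by omega
  set K : Fin N := ⟨k, hkN⟩ with hK
  set K1 : Fin N := ⟨k + 1, hk1N⟩ with hK1
  have hKv : ((K : ℕ) : ℤ) = (k : ℤ) := by simp [hK]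
  have hK1v : ((K1 : ℕ) : ℤ) = (k : ℤ) + 1 := by simp [hK1]
  -- rewriting the matrix of a cons configuration as a row update
  have hmat : ∀ (g : Fin (m + 1) → Fin L) (a : Fin L),
      mat N L b mu (m + 2) (Fin.cons a g) =
      Matrix.updateRow (mat N L b mu (m + 1) g) K
        (fun j => b j ^ (-(k : ℤ) - 1) * mu j ^ (a : ℕ)) := by
    intro g a
    ext i j
    rw [Matrix.updateRow_apply]
    by_cases hik : i = K
    · subst hik
      have h1 : ¬ ((K : ℕ) < N - (m + 2)) := by simp [hK]; omega
      have h2 : (K : ℕ) - (N - (m + 2)) < m + 2 := by simp [hK]; omega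
      rw [mat_apply, if_neg h1, dif_pos h2, if_pos rfl]
      have h3 : (⟨(K : ℕ) - (N - (m + 2)), h2⟩ : Fin (m + 2)) = 0 := by
        apply Fin.ext; simp [hK]; omega
      rw [h3, Fin.cons_zero]
    · rw [if_neg hik, mat_apply, mat_apply]
      have hikv : (i : ℕ) ≠ k := fun h => hik (Fin.ext h)
      by_cases hlt : (i : ℕ) < k
      · rw [if_pos (by omega), if_pos (by omega)]
      · have hgt : k + 1 ≤ (i : ℕ) := by omega
        have e2 : (i : ℕ) - (N - (m + 2)) < m + 2 := by omega
        have e3 : (i : ℕ) - (N - (m + 1)) < m + 1 := by omega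
        rw [if_neg (by omega), if_neg (by omega), dif_pos e2, dif_pos e3]
        have h4 : (⟨(i : ℕ) - (N - (m + 2)), e2⟩ : Fin (m + 2)) =
            Fin.succ ⟨(i : ℕ) - (N - (m + 1)), e3⟩ := by
          apply Fin.ext
          simp only [Fin.val_succ]
          omega
        rw [h4, Fin.cons_succ]
  -- sum over configurations
  rw [bSum, ← Equiv.sum_comp (consEquiv L m).symm
    (fun f => (mat N L b mu (m + 2) f.1).det), ← Finset.univ_sigma_univ, Finset.sum_sigma]
  rw [bSum]
  apply Finset.sum_congr rfl
  intro g _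
  set C : Matrix (Fin N) (Fin N) ℂ := mat N L b mu (m + 1) g.1 with hC
  calc ∑ a : {a : Fin L // a < g.1 0},
        (mat N L b mu (m + 2) ((consEquiv L m).symm ⟨g, a⟩).1).det
      = ∑ a : {a : Fin L // a < g.1 0},
        (Matrix.updateRow C K
          (fun j => b j ^ (-(k : ℤ) - 1) * mu j ^ ((a.1 : Fin L) : ℕ))).det := by
        apply Finset.sum_congr rfl
        intro a _
        have : ((consEquiv L m).symm ⟨g, a⟩).1 = Fin.cons a.1 g.1 := rfl
        rw [this, hmat]
    _ = (Matrix.updateRow C K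
          (∑ a : {a : Fin L // a < g.1 0},
            fun j => b j ^ (-(k : ℤ) - 1) * mu j ^ ((a.1 : Fin L) : ℕ))).det := by
        rw [det_updateRow_sum'']
    _ = C.det := by
        have hsum : (∑ a : {a : Fin L // a < g.1 0},
            fun j => b j ^ (-(k : ℤ) - 1) * mu j ^ ((a.1 : Fin L) : ℕ)) =
            (fun j => b j ^ (-(k : ℤ) - 2)) +
            (-1 : ℂ) • (fun j => b j ^ (-(k : ℤ) - 2) * mu j ^ ((g.1 0 : Fin L) : ℕ)) := by
          funext j
          rw [Finset.sum_apply]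
          have h5 : ∑ a : {a : Fin L // a < g.1 0},
              b j ^ (-(k : ℤ) - 1) * mu j ^ ((a.1 : Fin L) : ℕ)
              = ∑ x ∈ Finset.range ((g.1 0 : Fin L) : ℕ),
                  b j ^ (-(k : ℤ) - 1) * mu j ^ x :=
            sum_subtype_lt (g.1 0) (fun x => b j ^ (-(k : ℤ) - 1) * mu j ^ x)
          rw [h5, ← Finset.mul_sum, geom (mu j) (b j) (hb j) (hb0 j)]
          have hbz : b j ^ (-(k : ℤ) - 1) = b j ^ (-(k : ℤ) - 2) * b j := by
            rw [← zpow_add_one₀ (hb0 j)]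
            congr 1
            ring
          simp only [Pi.add_apply, Pi.smul_apply, smul_eq_mul]
          rw [mul_div_assoc', div_eq_iff (hb0 j), hbz]
          ring
        rw [hsum, Matrix.det_updateRow_add, Matrix.det_updateRow_smul]
        -- first determinant: the new row is already row K of C
        have hrowK : C K = fun j => b j ^ (-(k : ℤ) - 2) := by
          have := mat_row_fixed N L (m + 1) b mu g.1 K (by simp [hK, hNm1])
          rw [hC, this]
        rw [← hrowK, Matrix.updateRow_eq_self]
        -- second determinant: the new row equals row K1 of C
        have hrowK1 : C K1 = fun j => b j ^ (-(k : ℤ) - 2) * mu j ^ ((g.1 0 : Fin L) : ℕ) := by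
          have h6 := mat_row_var N L (m + 1) b mu g.1 K1 0 (by simp [hK1, hNm1]) (by omega)
          rw [hC, h6]
          funext j
          rw [hK1v]
          ring_nf
        have hKK1 : K1 ≠ K := by
          simp [hK, hK1, Fin.ext_iff]
        rw [← hrowK1, Matrix.det_updateRow_eq_zero hKK1]
        ring



noncomputable def oneEquiv (L : ℕ) : {f : Fin 1 → Fin L // StrictMono f} ≃ Fin L :=
  ⟨fun f => f.1 0, fun a => ⟨fun _ => a, fun i j hij =>
      absurd (Subsingleton.elim i j) (ne_of_lt hij)⟩,
    fun f => by
      apply Subtype.ext; funext i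
      have : i = 0 := Subsingleton.elim i 0
      rw [this],
    fun a => rfl⟩

lemma final (n L : ℕ) (z : ℂ) (b mu : Fin (n + 1) → ℂ)
    (hb : ∀ j, b j = 1 - mu j) (hb0 : ∀ j, b j ≠ 0)
    (hB : ∀ j, mu j ^ L = b j ^ (n + 1) * (z ^ L)⁻¹) :
    bSum (n + 1) L b mu 1 =
      (1 + (-1 : ℂ) ^ (n + 1) * (z ^ L)⁻¹ * ∏ j, b j) *
        (Matrix.of fun i j : Fin (n + 1) => b j ^ (-((i : ℕ) : ℤ) - 2)).det := by
  set A : Matrix (Fin (n + 1)) (Fin (n + 1)) ℂ :=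
    Matrix.of fun i j => b j ^ (-((i : ℕ) : ℤ) - 2) with hA
  have hlastN : n < n + 1 := by omega
  set K : Fin (n + 1) := ⟨n, hlastN⟩ with hK
  have hKv : ((K : ℕ) : ℤ) = (n : ℤ) := by simp [hK]
  -- the sum over configurations of one particle is the sum over Fin L
  rw [bSum, ← Equiv.sum_comp (oneEquiv L).symm (fun f => (mat (n + 1) L b mu 1 f.1).det)]
  have hmat1 : ∀ a : Fin L, mat (n + 1) L b mu 1 (fun _ => a) =
      Matrix.updateRow A K (fun j => b j ^ (-(n : ℤ) - 1) * mu j ^ (a : ℕ)) := by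
    intro a
    ext i j
    rw [Matrix.updateRow_apply]
    by_cases hik : i = K
    · subst hik
      have h1 : ¬ ((K : ℕ) < n + 1 - 1) := by simp [hK]
      have h2 : (K : ℕ) - (n + 1 - 1) < 1 := by simp [hK]
      rw [mat_apply, if_neg h1, dif_pos h2, if_pos rfl]
    · rw [if_neg hik, mat_apply]
      have hikv : (i : ℕ) ≠ n := fun h => hik (Fin.ext h)
      rw [if_pos (by omega)]
      rfl
  calc ∑ a : Fin L, (mat (n + 1) L b mu 1 (((oneEquiv L).symm a).1)).det
      = ∑ a : Fin L,
          (Matrix.updateRow A K (fun j => b j ^ (-(n : ℤ) - 1) * mu j ^ (a : ℕ))).det := by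
        apply Finset.sum_congr rfl
        intro a _
        have : ((oneEquiv L).symm a).1 = fun _ => a := rfl
        rw [this, hmat1]
    _ = (Matrix.updateRow A K
          (∑ a : Fin L, fun j => b j ^ (-(n : ℤ) - 1) * mu j ^ (a : ℕ))).det := by
        rw [det_updateRow_sum'']
    _ = (1 + (-1 : ℂ) ^ (n + 1) * (z ^ L)⁻¹ * ∏ j, b j) * A.det := by
        have key : ∀ j, b j ^ (-(n : ℤ) - 2) * mu j ^ L = (z ^ L)⁻¹ * (b j)⁻¹ := by
          intro j
          rw [hB j, ← zpow_natCast (b j) (n + 1), ← mul_assoc, ← zpow_add₀ (hb0 j)]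
          have hexp : (-(n : ℤ) - 2) + ((n + 1 : ℕ) : ℤ) = -1 := by push_cast; ring
          rw [hexp, _root_.zpow_neg_one, mul_comm]
        have hsum : (∑ a : Fin L, fun j => b j ^ (-(n : ℤ) - 1) * mu j ^ (a : ℕ)) =
            A K + (-(z ^ L)⁻¹ : ℂ) • (fun j => (b j)⁻¹) := by
          funext j
          rw [Finset.sum_apply]
          have h5 : ∑ a : Fin L, b j ^ (-(n : ℤ) - 1) * mu j ^ (a : ℕ)
              = ∑ x ∈ Finset.range L, b j ^ (-(n : ℤ) - 1) * mu j ^ x :=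
            Fin.sum_univ_eq_sum_range (fun x => b j ^ (-(n : ℤ) - 1) * mu j ^ x) L
          rw [h5, ← Finset.mul_sum, geom (mu j) (b j) (hb j) (hb0 j)]
          have hbz : b j ^ (-(n : ℤ) - 1) = b j ^ (-(n : ℤ) - 2) * b j := by
            rw [← zpow_add_one₀ (hb0 j)]
            congr 1
            ring
          simp only [Pi.add_apply, Pi.smul_apply, smul_eq_mul, hA, Matrix.of_apply, hKv]
          rw [mul_div_assoc', div_eq_iff (hb0 j), hbz]
          have hKvv : (((⟨n, hlastN⟩ : Fin (n + 1)) : ℕ) : ℤ) = (n : ℤ) := by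
            norm_num
          rw [hKvv]
          linear_combination (-(b j)) * key j
        rw [hsum, Matrix.det_updateRow_add, Matrix.updateRow_eq_self,
          Matrix.det_updateRow_smul]
        -- rotate rows
        set B : Matrix (Fin (n + 1)) (Fin (n + 1)) ℂ :=
          Matrix.of fun i j => b j ^ (-((i : ℕ) : ℤ) - 1) with hBdef
        have hsub : Matrix.updateRow A K (fun j => (b j)⁻¹) =
            B.submatrix (finRotate (n + 1)) id := by
          ext i j
          rw [Matrix.submatrix_apply, id]
          by_cases hi : i = K
          · subst hi
            rw [Matrix.updateRow_self]
            have hrot : finRotate (n + 1) K = 0 := by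
              have : K = Fin.last n := rfl
              rw [this, finRotate_last]
            rw [hrot]
            show (b j)⁻¹ = b j ^ (-((0 : ℕ) : ℤ) - 1)
            norm_num
          · rw [Matrix.updateRow_ne hi]
            have hiv : (i : ℕ) < n := by
              have := i.isLt
              have : (i : ℕ) ≠ n := fun h => hi (Fin.ext h)
              omega
            have hrotv : ((finRotate (n + 1) i : ℕ) : ℤ) = ((i : ℕ) : ℤ) + 1 := by
              rw [finRotate_succ_apply]
              have : ((i + 1 : Fin (n + 1)) : ℕ) = (i : ℕ) + 1 :=
                Fin.val_add_one_of_lt (by rw [Fin.lt_iff_val_lt_val]; simpa using hiv)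
              rw [this]
              push_cast
              ring
            show b j ^ (-((i : ℕ) : ℤ) - 2) = b j ^ (-((finRotate (n + 1) i : ℕ) : ℤ) - 1)
            rw [hrotv]
            congr 1
            ring
        have hBA : B = A * Matrix.diagonal b := by
          ext i j
          rw [Matrix.mul_diagonal]
          show b j ^ (-((i : ℕ) : ℤ) - 1) = b j ^ (-((i : ℕ) : ℤ) - 2) * b j
          rw [← zpow_add_one₀ (hb0 j)]
          congr 1
          ring
        have hdetB : (Matrix.updateRow A K (fun j => (b j)⁻¹)).det =
            (-1 : ℂ) ^ n * ((∏ j, b j) * A.det) := by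
          rw [hsub, Matrix.det_permute, sign_finRotate, hBA, Matrix.det_mul,
            Matrix.det_diagonal]
          push_cast
          ring
        rw [hdetB]
        ring


lemma chain (N L : ℕ) (b mu : Fin N → ℂ) (hb : ∀ j, b j = 1 - mu j) (hb0 : ∀ j, b j ≠ 0)
    (m : ℕ) (hm : 1 ≤ m) (hmN : m ≤ N) : bSum N L b mu m = bSum N L b mu 1 := by
  induction m with
  | zero => omega
  | succ m ih =>
      rcases Nat.eq_or_lt_of_le hm with h | h
      · rw [← h]
      · have hm1 : 1 ≤ m := by omega
        rw [step N L b mu hb hb0 m hm1 hmN, ih hm1 (by omega)]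

end SCB

/-- Summation of the Bethe determinant over all configurations. -/
theorem sum_config_bethe_det (L N : ℕ) (hN : 1 ≤ N) (hNL : N ≤ L)
    (z : ℂ) (hz : z ≠ 0) (lam : Fin N → ℂ)
    (h0 : ∀ i, lam i ≠ 0) (h1 : ∀ i, lam i ≠ 1)
    (hBethe : ∀ i, (lam i) ^ L * (1 - (lam i)⁻¹) ^ N = z ^ L) :
    ∑ x : {f : Fin N → Fin L // StrictMono f},
        Matrix.det (Matrix.of fun i j : Fin N =>
          (1 - (lam j)⁻¹) ^ (-((i : ℕ) : ℤ) - 1) * (lam j) ^ (-((x.1 i : ℕ) : ℤ)))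
      = (1 + (-1 : ℂ) ^ N * z ^ (-(L : ℤ)) * ∏ i, (1 - (lam i)⁻¹)) *
          Matrix.det (Matrix.of fun i j : Fin N =>
            (1 - (lam j)⁻¹) ^ (-((i : ℕ) : ℤ) - 2)) := by
  obtain ⟨n, rfl⟩ : ∃ n, N = n + 1 := ⟨N - 1, by omega⟩
  set mu : Fin (n + 1) → ℂ := fun j => (lam j)⁻¹ with hmu
  set b : Fin (n + 1) → ℂ := fun j => 1 - (lam j)⁻¹ with hbdef
  have hb : ∀ j, b j = 1 - mu j := fun j => rfl
  have hb0 : ∀ j, b j ≠ 0 := by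
    intro j h
    exact h1 j (inv_eq_one.mp (sub_eq_zero.mp h).symm)
  have hzL : z ^ L ≠ 0 := pow_ne_zero _ hz
  have hB : ∀ j, mu j ^ L = b j ^ (n + 1) * (z ^ L)⁻¹ := by
    intro j
    have h2 : mu j ^ L = (lam j ^ L)⁻¹ := by rw [hmu]; simp [inv_pow]
    have hlL : lam j ^ L ≠ 0 := pow_ne_zero _ (h0 j)
    have h3 : (lam j ^ L)⁻¹ * (lam j ^ L * (1 - (lam j)⁻¹) ^ (n + 1))
        = (lam j ^ L)⁻¹ * z ^ L := by rw [hBethe j]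
    rw [← mul_assoc, inv_mul_cancel₀ hlL, one_mul] at h3
    rw [h2, hbdef]
    simp only []
    rw [h3, mul_assoc, mul_inv_cancel₀ hzL, mul_one]
  have hLHS : (∑ x : {f : Fin (n + 1) → Fin L // StrictMono f},
      Matrix.det (Matrix.of fun i j : Fin (n + 1) =>
        (1 - (lam j)⁻¹) ^ (-((i : ℕ) : ℤ) - 1) * (lam j) ^ (-((x.1 i : ℕ) : ℤ))))
      = SCB.bSum (n + 1) L b mu (n + 1) := by
    rw [SCB.bSum]
    apply Finset.sum_congr rfl
    intro x _
    congr 1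
    ext i j
    have hrow := SCB.mat_row_var (n + 1) L (n + 1) b mu x.1 i i (by omega) le_rfl
    rw [hrow]
    show (1 - (lam j)⁻¹) ^ (-((i : ℕ) : ℤ) - 1) * (lam j) ^ (-((x.1 i : ℕ) : ℤ))
      = b j ^ (-((i : ℕ) : ℤ) - 1) * mu j ^ ((x.1 i : ℕ))
    rw [hbdef, hmu]
    simp only []
    rw [zpow_neg, zpow_natCast, inv_pow]
  rw [hLHS, SCB.chain (n + 1) L b mu hb hb0 (n + 1) (by omega) le_rfl,
    SCB.final n L z b mu hb hb0 hB]
  rw [zpow_neg, zpow_natCast]
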